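/- If (P_1, P_2) satisfies A·P_1^i ≤ P_1^i + b²·P_2^i for every i = 1,…,K+1, then F(P_1, P_2) = ∑_{i=1}^{K+1} C(A·P_1^i/N_0)·l^i; consequently, if such a pair (P_1, P_2) ∈ D maximizes F over D and (P_1, P_2') ∈ D satisfies P_2'^i ≥ P_2^i for all i, then (P_1, P_2') also maximizes F over D. In particular, the optimal power allocation for the no-ET problem is not necessarily unique. -/
import Mathlib


/-- `C(x) = log₂(1+x)`. -/
noncomputable def Cfun (x : ℝ) : ℝ := Real.logb 2 (1 + x)

/-- `A = max(1, a²)`. -/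
noncomputable def Aval (a : ℝ) : ℝ := max 1 (a ^ 2)

/-- The full-duplex noncoherent DF throughput
`F(P₁,P₂) = ∑_{i=1}^{K+1} min{ C((P₁ⁱ+b²P₂ⁱ)/N₀), C(A·P₁ⁱ/N₀) }·lⁱ`
(epochs indexed `0,…,K`). -/
noncomputable def Fthr (K : ℕ) (l : ℕ → ℝ) (N0 a b : ℝ) (P1 P2 : ℕ → ℝ) : ℝ :=
  ∑ i ∈ Finset.range (K + 1),
    min (Cfun ((P1 i + b ^ 2 * P2 i) / N0)) (Cfun (Aval a * P1 i / N0)) * l i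

/-- The no-ET feasible set `D`: nonnegative powers and energy causality at S and R. -/
def InD (K : ℕ) (l E1 E2 : ℕ → ℝ) (P1 P2 : ℕ → ℝ) : Prop :=
  (∀ i ∈ Finset.range (K + 1), 0 ≤ P1 i ∧ 0 ≤ P2 i) ∧
  (∀ k, 1 ≤ k → k ≤ K + 1 →
    ∑ i ∈ Finset.range k, P1 i * l i ≤ ∑ i ∈ Finset.range k, E1 i) ∧
  (∀ k, 1 ≤ k → k ≤ K + 1 →
    ∑ i ∈ Finset.range k, P2 i * l i ≤ ∑ i ∈ Finset.range k, E2 i)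

/-- The total-power feasible set `T` for total energies `Et`. -/
def InT (K : ℕ) (l Et : ℕ → ℝ) (Pt : ℕ → ℝ) : Prop :=
  (∀ i ∈ Finset.range (K + 1), 0 ≤ Pt i) ∧
  (∀ k, 1 ≤ k → k ≤ K + 1 →
    ∑ i ∈ Finset.range k, Pt i * l i ≤ ∑ i ∈ Finset.range k, Et i)

/-- Lemma 2: if `A·P₁ⁱ ≤ P₁ⁱ + b²P₂ⁱ` for all `i` then `F` reduces to the
S–R rate sum; consequently enlarging the relay powers of such an optimal pair (staying in
`D`) preserves optimality — the optimal allocation is not necessarily unique. -/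
theorem stmt_3 (K : ℕ) (l E1 E2 : ℕ → ℝ) (N0 a b : ℝ)
    (hl : ∀ i ∈ Finset.range (K + 1), 0 < l i)
    (hE1 : ∀ i ∈ Finset.range (K + 1), 0 ≤ E1 i)
    (hE2 : ∀ i ∈ Finset.range (K + 1), 0 ≤ E2 i)
    (hN0 : 0 < N0) (hb : b ≠ 0) :
    (∀ P1 P2 : ℕ → ℝ, InD K l E1 E2 P1 P2 →
      (∀ i ∈ Finset.range (K + 1), Aval a * P1 i ≤ P1 i + b ^ 2 * P2 i) →
      Fthr K l N0 a b P1 P2 =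
        ∑ i ∈ Finset.range (K + 1), Cfun (Aval a * P1 i / N0) * l i) ∧
    (∀ P1 P2 P2' : ℕ → ℝ,
      (∀ i ∈ Finset.range (K + 1), Aval a * P1 i ≤ P1 i + b ^ 2 * P2 i) →
      InD K l E1 E2 P1 P2 →
      IsGreatest {y : ℝ | ∃ Q1 Q2 : ℕ → ℝ, InD K l E1 E2 Q1 Q2 ∧ y = Fthr K l N0 a b Q1 Q2}
        (Fthr K l N0 a b P1 P2) →
      InD K l E1 E2 P1 P2' →
      (∀ i ∈ Finset.range (K + 1), P2 i ≤ P2' i) →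
      IsGreatest {y : ℝ | ∃ Q1 Q2 : ℕ → ℝ, InD K l E1 E2 Q1 Q2 ∧ y = Fthr K l N0 a b Q1 Q2}
        (Fthr K l N0 a b P1 P2')) := by
  have key : ∀ P1 P2 : ℕ → ℝ,
      (∀ i ∈ Finset.range (K + 1), 0 ≤ P1 i ∧ 0 ≤ P2 i) →
      (∀ i ∈ Finset.range (K + 1), Aval a * P1 i ≤ P1 i + b ^ 2 * P2 i) →
      Fthr K l N0 a b P1 P2 =
        ∑ i ∈ Finset.range (K + 1), Cfun (Aval a * P1 i / N0) * l i := by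
    intro P1 P2 hpos hcond
    unfold Fthr
    refine Finset.sum_congr rfl fun i hi => ?_
    have h1 := (hpos i hi).1
    have h2 := (hpos i hi).2
    have hA : (0:ℝ) ≤ Aval a := le_trans zero_le_one (le_max_left _ _)
    have hx : 0 ≤ Aval a * P1 i / N0 := by positivity
    congr 1
    rw [min_eq_right]
    unfold Cfun
    have hc := hcond i hi
    have hd : Aval a * P1 i / N0 ≤ (P1 i + b ^ 2 * P2 i) / N0 :=
      (div_le_div_iff_of_pos_right hN0).mpr hc
    exact Real.logb_le_logb_of_le one_lt_two (by positivity) (by linarith)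
  constructor
  · intro P1 P2 hD hcond
    exact key P1 P2 hD.1 hcond
  · intro P1 P2 P2' hcond hD hgr hD' hle
    have hcond' : ∀ i ∈ Finset.range (K + 1), Aval a * P1 i ≤ P1 i + b ^ 2 * P2' i := by
      intro i hi
      have := hcond i hi
      have h2 := hle i hi
      nlinarith [sq_nonneg b]
    have heq : Fthr K l N0 a b P1 P2' = Fthr K l N0 a b P1 P2 := by
      rw [key P1 P2 hD.1 hcond, key P1 P2' hD'.1 hcond']
    constructor
    · exact ⟨P1, P2', hD', rfl⟩
    · intro y hy
      rw [heq]
      exact hgr.2 hy
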